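/- Let ζ ∈ ℂ be a root of unity such that ζ² is a primitive ℓ̄-th root of unity with ℓ̄ > 1. For u, v ∈ ℕ write u = a·ℓ̄ + r and v = b·ℓ̄ + s with 0 ≤ r, s < ℓ̄. Then the balanced quantum binomial coefficient evaluated at ζ satisfies: [u+v choose u]_ζ = 0 if and only if r + s ≥ ℓ̄. -/

import Mathlib

/-- The balanced quantum binomial coefficient `[n choose k]` (the evaluation at `ζ ∈ ℂ`
of the Laurent polynomial `[n]!/([k]![n−k]!) ∈ ℤ[q,q⁻¹]`, where `[m] = (q^m−q^{−m})/(q−q^{−1})`),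
defined through the Pascal-type recursion
`[n+1 choose k+1] = ζ^{k+1}[n choose k+1] + ζ^{−(n−k)}[n choose k]` that it satisfies. -/
noncomputable def qBinomC (ζ : ℂ) : ℕ → ℕ → ℂ
  | _, 0 => 1
  | 0, _ + 1 => 0
  | n + 1, k + 1 =>
      ζ ^ (k + 1) * qBinomC ζ n (k + 1) + ζ ^ (-((n : ℤ) - (k : ℤ))) * qBinomC ζ n k


namespace QLucas

noncomputable def gB (t : ℂ) : ℕ → ℕ → ℂ
  | _, 0 => 1
  | 0, _ + 1 => 0
  | n + 1, k + 1 => t ^ (k + 1) * gB t n (k + 1) + gB t n k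

noncomputable def qn (t : ℂ) (m : ℕ) : ℂ := ∑ i ∈ Finset.range m, t ^ i

variable (t : ℂ)

@[simp] lemma gB_zero (n : ℕ) : gB t n 0 = 1 := by cases n <;> rfl
@[simp] lemma gB_zero_succ (k : ℕ) : gB t 0 (k+1) = 0 := rfl
lemma gB_succ (n k : ℕ) :
    gB t (n+1) (k+1) = t ^ (k+1) * gB t n (k+1) + gB t n k := rfl

lemma gB_eq_zero_of_lt : ∀ {n k}, n < k → gB t n k = 0 := by
  intro n
  induction n with
  | zero => intro k hk; obtain ⟨k, rfl⟩ := Nat.exists_eq_add_of_lt hk; rfl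
  | succ n ih =>
    intro k hk
    obtain ⟨j, rfl⟩ : ∃ j, k = j + 1 := ⟨k - 1, by omega⟩
    rw [gB_succ, ih (by omega), ih (by omega)]
    ring

@[simp] lemma gB_self : ∀ n, gB t n n = 1 := by
  intro n
  induction n with
  | zero => rfl
  | succ n ih => rw [gB_succ, ih, gB_eq_zero_of_lt t (by omega)]; ring

@[simp] lemma qn_zero : qn t 0 = 0 := rfl
@[simp] lemma qn_one : qn t 1 = 1 := by simp [qn]
lemma qn_succ (m : ℕ) : qn t (m+1) = t * qn t m + 1 := geom_sum_succ

lemma qn_mul (m : ℕ) : qn t m * (t - 1) = t ^ m - 1 := geom_sum_mul t m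

lemma qn_add (a b : ℕ) : qn t (a + b) = qn t a + t ^ a * qn t b := by
  induction b with
  | zero => simp
  | succ b ih =>
    have h : qn t ((a+b)+1) = t^(a+b) + qn t (a+b) := geom_sum_succ'
    rw [show a + (b+1) = (a+b)+1 from rfl, h, ih,
      show qn t (b+1) = t^b + qn t b from geom_sum_succ', pow_add]
    ring

lemma AB : ∀ n : ℕ,
    (∀ k, qn t (k+1) * gB t (n+1) (k+1) = qn t (n+1) * gB t n k) ∧
    (∀ k, qn t (n+1-k) * gB t (n+1) k = qn t (n+1) * gB t n k) := by
  intro n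
  induction n with
  | zero =>
    constructor
    · intro k
      cases k with
      | zero => simp [gB_succ]
      | succ j => simp [gB_succ]
    · intro k
      match k with
      | 0 => simp
      | 1 => simp
      | (j+2) => rw [gB_eq_zero_of_lt t (show 1 < j+2 by omega),
          gB_eq_zero_of_lt t (show 0 < j+2 by omega)]; ring
  | succ n ih =>
    obtain ⟨ihA, ihB⟩ := ih
    have hA : ∀ k, qn t (k+1) * gB t (n+2) (k+1) = qn t (n+2) * gB t (n+1) k := by
      intro k
      by_cases hk : k ≤ n + 1
      · have hsplit : qn t (n+2) = qn t (k+1) + t ^ (k+1) * qn t (n+1-k) := by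
          rw [← qn_add]; congr 1; omega
        rw [gB_succ, hsplit]
        have e1 := ihA k
        have e2 := ihB k
        linear_combination t^(k+1) * e1 - t^(k+1) * e2
      · rw [gB_eq_zero_of_lt t (show n+2 < k+1 by omega),
            gB_eq_zero_of_lt t (show n+1 < k by omega)]
        ring
    refine ⟨hA, ?_⟩
    intro k
    match k with
    | 0 => simp
    | (j+1) =>
      by_cases hj : j ≤ n
      · have e1 := ihB (j+1)
        have e2 := ihB j
        have e3 := ihA j
        have e4 := qn_mul t (j+1)
        have e5 := gB_succ t n j
        have h1 : n + 1 - (j+1) = n - j := by omega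
        have h2 : n + 1 - j = (n - j) + 1 := by omega
        have h3 : n + 2 - (j+1) = (n-j) + 1 := by omega
        rw [h1] at e1
        rw [h2, qn_succ] at e2
        rw [h3, qn_succ, gB_succ, qn_succ t (n+1)]
        linear_combination e2 + t^(j+2) * e1 - t * (qn t (n+1)) * e5 - (gB t (n+1) (j+1)) * e4 + (t-1) * e3
      · by_cases hj2 : j = n + 1
        · subst hj2
          rw [show n + 2 - (n+1+1) = 0 by omega,
            gB_eq_zero_of_lt t (show n+1 < n+1+1 by omega)]
          simp
        · rw [gB_eq_zero_of_lt t (show n+2 < j+1 by omega),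
            gB_eq_zero_of_lt t (show n+1 < j+1 by omega)]
          ring

end QLucas

namespace QLucas
section Root
variable {t : ℂ} {l : ℕ} (hl : 1 < l) (h1 : t ^ l = 1)
  (hne : ∀ j, 0 < j → j < l → t ^ j ≠ 1)

include hne hl in
lemma t_ne_one : t ≠ 1 := by
  have := hne 1 one_pos hl
  simpa using this

include hl hne in
lemma qn_ne_zero {j : ℕ} (h0 : 0 < j) (hj : j < l) : qn t j ≠ 0 := by
  have ht : t ≠ 1 := t_ne_one hl hne
  rw [qn, geom_sum_eq ht]
  exact div_ne_zero (sub_ne_zero.mpr (hne j h0 hj)) (sub_ne_zero.mpr ht)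

include hl h1 hne in
lemma qn_l_eq_zero : qn t l = 0 := by
  rw [qn, geom_sum_eq (t_ne_one hl hne), h1, sub_self, zero_div]

include hl h1 hne in
lemma gB_l_eq_zero {j : ℕ} (h0 : 0 < j) (hj : j < l) : gB t l j = 0 := by
  obtain ⟨k, rfl⟩ : ∃ k, j = k + 1 := ⟨j - 1, by omega⟩
  obtain ⟨m, rfl⟩ : ∃ m, l = m + 1 := ⟨l - 1, by omega⟩
  have := (AB t m).1 k
  rw [qn_l_eq_zero hl h1 hne, zero_mul] at this
  have hq := qn_ne_zero hl hne (Nat.succ_pos k) hj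
  exact (mul_eq_zero.mp this).resolve_left hq

include hl hne in
lemma gB_ne_zero : ∀ (k : ℕ) {n : ℕ}, k ≤ n → n < l → gB t n k ≠ 0 := by
  intro k
  induction k with
  | zero => intro n _ _; simp
  | succ k ih =>
    intro n hkn hnl
    obtain ⟨m, rfl⟩ : ∃ m, n = m + 1 := ⟨n - 1, by omega⟩
    have hAB := (AB t m).1 k
    intro h0
    rw [h0, mul_zero] at hAB
    have := mul_ne_zero (qn_ne_zero hl hne (Nat.succ_pos m) hnl)
      (ih (show k ≤ m by omega) (show m < l by omega))
    exact this hAB.symm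

include hl h1 hne in
lemma gB_add_l : ∀ (n k : ℕ),
    gB t (n + l) k = gB t n k + if l ≤ k then gB t n (k - l) else 0 := by
  intro n
  induction n with
  | zero =>
    intro k
    rw [Nat.zero_add]
    rcases lt_trichotomy k l with h | h | h
    · rcases Nat.eq_zero_or_pos k with rfl | hk0
      · simp [show ¬ l ≤ 0 by omega]
      · rw [gB_l_eq_zero hl h1 hne hk0 h, if_neg (by omega),
          gB_eq_zero_of_lt t (by omega : 0 < k)]
        ring
    · subst h
      rw [gB_self, if_pos le_rfl, Nat.sub_self,
        gB_eq_zero_of_lt t (by omega : 0 < k), gB_zero]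
      ring
    · rw [gB_eq_zero_of_lt t h, if_pos (by omega),
        gB_eq_zero_of_lt t (by omega : 0 < k),
        gB_eq_zero_of_lt t (by omega : 0 < k - l)]
      ring
  | succ n ih =>
    intro k
    rcases Nat.eq_zero_or_pos k with rfl | hk0
    · simp [show ¬ l ≤ 0 by omega]
    obtain ⟨j, rfl⟩ : ∃ j, k = j + 1 := ⟨k - 1, by omega⟩
    rw [show n + 1 + l = (n + l) + 1 by omega, gB_succ, ih (j+1), ih j, gB_succ]
    rcases lt_trichotomy (j+1) l with h | h | h
    · rw [if_neg (by omega), if_neg (by omega), if_neg (by omega)]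
      ring
    · have h1' : t ^ (j+1) = 1 := by rw [h]; exact h1
      rw [if_pos (by omega), if_neg (by omega), if_pos (by omega),
        show j + 1 - l = 0 by omega, gB_zero, gB_zero, h1']
      ring
    · have hjl : l ≤ j := by omega
      rw [if_pos (by omega), if_pos hjl, if_pos (by omega),
        show j + 1 - l = (j - l) + 1 by omega, gB_succ,
        show t ^ (j - l + 1) = t ^ (j+1) by
          rw [← one_mul (t ^ (j - l + 1)), ← h1, ← pow_add]; congr 1; omega]
      ring

include hl h1 hne in
lemma gB_lucas (m c : ℕ) (hc : c < l) : ∀ k : ℕ,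
    gB t (m * l + c) k = (Nat.choose m (k / l) : ℂ) * gB t c (k % l) := by
  induction m with
  | zero =>
    intro k
    rw [Nat.zero_mul, Nat.zero_add]
    rcases lt_or_ge k l with h | h
    · rw [Nat.div_eq_of_lt h, Nat.mod_eq_of_lt h]
      simp
    · rw [gB_eq_zero_of_lt t (by omega : c < k),
        Nat.choose_eq_zero_of_lt (Nat.div_pos h (by omega)), Nat.cast_zero,
        zero_mul]
  | succ m ih =>
    intro k
    rw [show (m+1) * l + c = (m * l + c) + l by ring, gB_add_l hl h1 hne,
      ih k]
    rcases lt_or_ge k l with h | h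
    · rw [if_neg (by omega), Nat.div_eq_of_lt h, Nat.choose_zero_right,
        Nat.choose_zero_right]
      ring
    · rw [if_pos h, ih (k - l)]
      obtain ⟨q, hq⟩ : ∃ q, k / l = q + 1 :=
        ⟨k / l - 1, by have := (Nat.one_le_div_iff (show 0 < l by omega)).mpr h; omega⟩
      have hdm := Nat.div_add_mod k l
      rw [hq] at hdm
      have hm : k % l < l := Nat.mod_lt _ (by omega)
      have hmul : l * (q + 1) = l * q + l := by ring
      have hsub : k - l = l * q + k % l := by omega
      rw [hsub, Nat.mul_add_div (by omega), Nat.mul_add_mod,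
        Nat.mod_eq_of_lt hm, Nat.div_eq_of_lt hm, Nat.add_zero, hq,
        Nat.choose_succ_succ]
      push_cast
      ring

end Root
end QLucas

namespace QLucas

lemma qBinomC_rel (ζ : ℂ) (hζ0 : ζ ≠ 0) : ∀ n k : ℕ,
    ζ ^ (k * n) * qBinomC ζ n k = ζ ^ (k * k) * gB (ζ^2) n k := by
  intro n
  induction n with
  | zero =>
    intro k
    cases k with
    | zero => rfl
    | succ k =>
      show ζ ^ _ * qBinomC ζ 0 (k+1) = ζ ^ _ * gB (ζ^2) 0 (k+1)
      rw [show qBinomC ζ 0 (k+1) = 0 from rfl, gB_zero_succ, mul_zero, mul_zero]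
  | succ n ih =>
    intro k
    cases k with
    | zero =>
      rw [Nat.zero_mul, Nat.zero_mul, show qBinomC ζ (n+1) 0 = 1 from rfl, gB_zero]
    | succ k =>
      have hrec : qBinomC ζ (n+1) (k+1) =
          ζ ^ (k + 1) * qBinomC ζ n (k + 1) + ζ ^ (-((n : ℤ) - (k : ℤ))) * qBinomC ζ n k := rfl
      have key : ζ ^ ((k+1)*(n+1)) * ζ ^ (-((n : ℤ) - (k : ℤ))) = ζ ^ (2*k + 1 + k*n) := by
        rw [← zpow_natCast ζ ((k+1)*(n+1)), ← zpow_natCast ζ (2*k + 1 + k*n),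
          ← zpow_add₀ hζ0]
        congr 1
        push_cast
        ring
      rw [hrec, gB_succ]
      linear_combination ζ^(2*(k+1)) * ih (k+1) + ζ^(2*k+1) * ih k
        + qBinomC ζ n k * key

lemma qBinomC_eq_zero_iff (ζ : ℂ) (hζ0 : ζ ≠ 0) (n k : ℕ) :
    qBinomC ζ n k = 0 ↔ gB (ζ^2) n k = 0 := by
  have h := qBinomC_rel ζ hζ0 n k
  constructor
  · intro h0
    rw [h0, mul_zero] at h
    exact (mul_eq_zero.mp h.symm).resolve_left (pow_ne_zero _ hζ0)
  · intro h0
    rw [h0, mul_zero] at h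
    exact (mul_eq_zero.mp h).resolve_left (pow_ne_zero _ hζ0)

end QLucas

theorem stmt13 (ζ : ℂ) (l : ℕ) (hl : 1 < l) (hζ : IsPrimitiveRoot (ζ ^ 2) l)
    (u v a b r s : ℕ) (hu : u = a * l + r) (hr : r < l) (hv : v = b * l + s) (hs : s < l) :
    qBinomC ζ (u + v) u = 0 ↔ l ≤ r + s := by
  have hl0 : 0 < l := by omega
  have ht2 : (ζ^2) ≠ 0 := hζ.ne_zero (by omega)
  have hζ0 : ζ ≠ 0 := by
    intro h; exact ht2 (by rw [h]; ring)
  have h1 : (ζ^2) ^ l = 1 := hζ.pow_eq_one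
  have hne : ∀ j, 0 < j → j < l → (ζ^2) ^ j ≠ 1 := fun j h0 hj =>
    hζ.pow_ne_one_of_pos_of_lt h0.ne' hj
  rw [QLucas.qBinomC_eq_zero_iff ζ hζ0]
  have hdivmod : u / l = a ∧ u % l = r := by
    rw [hu, show a * l + r = l * a + r by ring, Nat.mul_add_div hl0,
      Nat.mul_add_mod, Nat.div_eq_of_lt hr, Nat.mod_eq_of_lt hr, Nat.add_zero]
    exact ⟨rfl, rfl⟩
  by_cases hrs : l ≤ r + s
  · simp only [hrs, iff_true]
    have huv : u + v = (a + b + 1) * l + (r + s - l) := by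
      have h2 : (a + b + 1) * l = a * l + b * l + l := by ring
      omega
    rw [huv, QLucas.gB_lucas hl h1 hne _ _ (by omega : r + s - l < l) u,
      hdivmod.1, hdivmod.2, QLucas.gB_eq_zero_of_lt _ (show r + s - l < r by omega),
      mul_zero]
  · simp only [hrs, iff_false]
    have huv : u + v = (a + b) * l + (r + s) := by
      have h2 : (a + b) * l = a * l + b * l := by ring
      omega
    rw [huv, QLucas.gB_lucas hl h1 hne _ _ (by omega : r + s < l) u,
      hdivmod.1, hdivmod.2]
    exact mul_ne_zero (Nat.cast_ne_zero.mpr (Nat.choose_pos (by omega : a ≤ a + b)).ne')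
      (QLucas.gB_ne_zero hl hne r (by omega) (by omega))
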